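/- arXiv:0910.3064 — 2 statements merged into one kernel-verified Lean document; each statement's English description precedes it below -/
import Mathlib

section
/- Let X be a Banach space and B : X × X → X a bilinear operator such that ‖B(x₁,x₂)‖ ≤ η‖x₁‖‖x₂‖ for all x₁, x₂ ∈ X, where η > 0. Then for any y ∈ X with 4η‖y‖ < 1, the equation x = y + B(x,x) has a solution x ∈ X, and this solution is the unique one satisfying ‖x‖ ≤ (1 - √(1 - 4η‖y‖))/(2η). -/
/-- Picard/fixed-point lemma for quadratic equations in a Banach space:
if `B` is bilinear with `‖B x₁ x₂‖ ≤ η ‖x₁‖ ‖x₂‖` and `4η‖y‖ < 1`, then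
`x = y + B x x` has a solution, unique among those with
`‖x‖ ≤ (1 - √(1 - 4η‖y‖)) / (2η)`. -/
theorem stmt_0 {X : Type*} [NormedAddCommGroup X] [NormedSpace ℝ X] [CompleteSpace X]
    (B : X →ₗ[ℝ] X →ₗ[ℝ] X) (η : ℝ) (hη : 0 < η)
    (hB : ∀ x₁ x₂ : X, ‖B x₁ x₂‖ ≤ η * ‖x₁‖ * ‖x₂‖)
    (y : X) (hy : 4 * η * ‖y‖ < 1) :
    ∃ x : X, x = y + B x x ∧ ‖x‖ ≤ (1 - Real.sqrt (1 - 4 * η * ‖y‖)) / (2 * η) ∧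
      ∀ z : X, z = y + B z z → ‖z‖ ≤ (1 - Real.sqrt (1 - 4 * η * ‖y‖)) / (2 * η) → z = x := by
  set s : ℝ := 1 - 4 * η * ‖y‖ with hs_def
  have hy0 : (0:ℝ) ≤ ‖y‖ := norm_nonneg y
  have hs0 : 0 < s := by simp only [hs_def]; linarith
  have hs1 : s ≤ 1 := by nlinarith
  have hsq : Real.sqrt s * Real.sqrt s = s := Real.mul_self_sqrt hs0.le
  have hsqpos : 0 < Real.sqrt s := Real.sqrt_pos.mpr hs0
  have hsqle : Real.sqrt s ≤ 1 := by
    rw [show (1:ℝ) = Real.sqrt 1 by simp]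
    exact Real.sqrt_le_sqrt hs1
  set r : ℝ := (1 - Real.sqrt s) / (2 * η) with hr_def
  have hr0 : 0 ≤ r := div_nonneg (by linarith) (by linarith)
  have h2 : 2 * η * r = 1 - Real.sqrt s := by
    rw [hr_def]; field_simp
  have hkey : η * r * r + ‖y‖ = r := by
    have h4 : 4 * η * (η * r * r + ‖y‖) = 4 * η * r := by
      have : (2*η*r) * (2*η*r) = (1 - Real.sqrt s) * (1 - Real.sqrt s) := by rw [h2]
      nlinarith [hsq]
    have h4η : (0:ℝ) < 4 * η := by linarith
    nlinarith
  -- the map on the closed ball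
  have hmap : ∀ x : X, ‖x‖ ≤ r → ‖y + B x x‖ ≤ r := by
    intro x hx
    calc ‖y + B x x‖ ≤ ‖y‖ + ‖B x x‖ := norm_add_le _ _
      _ ≤ ‖y‖ + η * ‖x‖ * ‖x‖ := by linarith [hB x x]
      _ ≤ ‖y‖ + η * r * r := by
          have h' : ‖x‖ * ‖x‖ ≤ r * r := mul_le_mul hx hx (norm_nonneg x) hr0
          nlinarith
      _ = r := by linarith
  -- contraction estimate
  have hcontr : ∀ a b : X, ‖a‖ ≤ r → ‖b‖ ≤ r →
      ‖(y + B a a) - (y + B b b)‖ ≤ (1 - Real.sqrt s) * ‖a - b‖ := by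
    intro a b ha hb
    have hdecomp : (y + B a a) - (y + B b b) = B a (a - b) + B (a - b) b := by
      simp [map_sub, LinearMap.sub_apply]
    rw [hdecomp]
    have h1 := hB a (a - b)
    have h2' := hB (a - b) b
    have hab : (0:ℝ) ≤ ‖a - b‖ := norm_nonneg _
    calc ‖B a (a-b) + B (a-b) b‖ ≤ ‖B a (a-b)‖ + ‖B (a-b) b‖ := norm_add_le _ _
      _ ≤ η * ‖a‖ * ‖a-b‖ + η * ‖a-b‖ * ‖b‖ := by linarith
      _ ≤ η * r * ‖a-b‖ + η * ‖a-b‖ * r := by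
          have h3 : ‖a‖ * ‖a-b‖ ≤ r * ‖a-b‖ := mul_le_mul_of_nonneg_right ha hab
          have h4 : ‖b‖ * ‖a-b‖ ≤ r * ‖a-b‖ := mul_le_mul_of_nonneg_right hb hab
          nlinarith
      _ = (2 * η * r) * ‖a-b‖ := by ring
      _ = (1 - Real.sqrt s) * ‖a-b‖ := by rw [h2]
  -- set up the fixed point on the closed ball
  set S := Metric.closedBall (0:X) r with hS_def
  have hmemS : ∀ x : X, x ∈ S ↔ ‖x‖ ≤ r := by
    intro x; simp [hS_def, Metric.mem_closedBall, dist_zero_right]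
  haveI : CompleteSpace S := (Metric.isClosed_closedBall : IsClosed S).completeSpace_coe
  haveI : Nonempty S := ⟨⟨0, by simp [hS_def, hr0]⟩⟩
  set K : NNReal := ⟨1 - Real.sqrt s, by linarith⟩ with hK_def
  have hK1 : K < 1 := by
    rw [← NNReal.coe_lt_coe]
    simp [hK_def]
    change 1 - Real.sqrt s < 1
    linarith
  set f : S → S := fun a => ⟨y + B a.1 a.1, (hmemS _).mpr (hmap a.1 ((hmemS _).mp a.2))⟩
    with hf_def
  have hlip : LipschitzWith K f := by
    apply LipschitzWith.of_dist_le_mul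
    intro a b
    have hda : dist (f a) (f b) = ‖(y + B a.1 a.1) - (y + B b.1 b.1)‖ := by
      rw [Subtype.dist_eq, dist_eq_norm]
    have hdb : dist a b = ‖a.1 - b.1‖ := by
      rw [Subtype.dist_eq, dist_eq_norm]
    rw [hda, hdb]
    exact hcontr a.1 b.1 ((hmemS _).mp a.2) ((hmemS _).mp b.2)
  have hc : ContractingWith K f := ⟨hK1, hlip⟩
  set x : S := hc.fixedPoint f with hx_def
  have hfx : f x = x := hc.fixedPoint_isFixedPt
  have hxnorm : ‖x.1‖ ≤ r := (hmemS _).mp x.2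
  have hxeq : (x:X) = y + B x.1 x.1 := by
    conv_lhs => rw [← hfx]
  refine ⟨x.1, hxeq, hxnorm, ?_⟩
  intro z hz hzr
  have hd := hcontr z x.1 hzr hxnorm
  rw [← hz, ← hxeq] at hd
  have hzx : (0:ℝ) ≤ ‖z - x.1‖ := norm_nonneg _
  have : ‖z - x.1‖ ≤ 0 := by nlinarith
  have : z - x.1 = 0 := by
    rwa [← norm_le_zero_iff]
  exact sub_eq_zero.mp this
end

section
/- Let γ be a multi-index and t ≥ 0, Ω ∈ ℝ. Then the function ξ ↦ e^{iΩ t ξ₃/|ξ|} on ℝ³ \ {0} satisfies |∂^γ (e^{iΩ t ξ₃/|ξ|})| ≤ C |ξ|^{-|γ|} (1 + |Ω| t)^{|γ|} for a constant C depending only on γ. -/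
open scoped Topology
open Set

private lemma myIteratedDerivCexpAux (c : ℂ) (i : ℕ) :
    iteratedDeriv i (fun x : ℝ => Complex.exp (c * x)) =
      fun x : ℝ => c ^ i * Complex.exp (c * x) := by
  induction i with
  | zero => funext x; simp
  | succ i IH =>
      rw [iteratedDeriv_succ, IH]
      funext x
      have h1 : HasDerivAt (fun x : ℝ => Complex.exp (c * x))
          (Complex.exp (c * x) * (c * 1)) x := by
        have hz : HasDerivAt (fun z : ℂ => Complex.exp (c * z))
            (Complex.exp (c * (x : ℂ)) * (c * 1)) (x : ℂ) :=
          (Complex.hasDerivAt_exp (c * (x : ℂ))).comp (x : ℂ)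
            ((hasDerivAt_id (x : ℂ)).const_mul c)
        exact hz.comp_ofReal
      have h2 : HasDerivAt (fun x : ℝ => c ^ i * Complex.exp (c * x))
          (c ^ i * (Complex.exp (c * x) * (c * 1))) x := h1.const_mul _
      rw [h2.deriv]
      ring

/-- Derivative bounds for the oscillating symbol `e^{iΩtξ₃/|ξ|}`: for every order `n = |γ|`
there is `C = C(γ)` with `‖∂^γ e^{iΩtξ₃/|ξ|}‖ ≤ C |ξ|^{-|γ|} (1 + |Ω|t)^{|γ|}` for all
`t ≥ 0`, `Ω ∈ ℝ` and `ξ ≠ 0`. -/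
theorem stmt_5 (n : ℕ) :
    ∃ C > 0, ∀ (Ω t : ℝ), 0 ≤ t → ∀ ξ : EuclideanSpace ℝ (Fin 3), ξ ≠ 0 →
      ‖iteratedFDeriv ℝ n
          (fun ζ : EuclideanSpace ℝ (Fin 3) =>
            Complex.exp (Complex.I * ((Ω * t * ζ 2 / ‖ζ‖ : ℝ) : ℂ))) ξ‖ ≤
        C * ‖ξ‖⁻¹ ^ n * (1 + |Ω| * t) ^ n := by
  classical
  set E := EuclideanSpace ℝ (Fin 3)
  set s : Set E := {(0 : E)}ᶜ with hs_def
  have hs_open : IsOpen s := isOpen_compl_singleton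
  have hs : UniqueDiffOn ℝ s := hs_open.uniqueDiffOn
  set u : E → ℝ := fun ζ => ζ 2 / ‖ζ‖ with hu_def
  have hmem : ∀ {x : E}, x ≠ 0 → x ∈ s := fun hx => by simpa [s] using hx
  have hu : ContDiffOn ℝ n u s := by
    have h1 : ContDiffOn ℝ n (fun ζ : E => ζ 2) s :=
      (EuclideanSpace.proj (2 : Fin 3) : E →L[ℝ] ℝ).contDiff.contDiffOn
    have h2 : ContDiffOn ℝ n (fun ζ : E => ‖ζ‖) s := fun x hx =>
      (contDiffAt_norm ℝ (by simpa [s] using hx)).contDiffWithinAt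
    exact h1.div h2 (fun x hx => norm_ne_zero_iff.2 (by simpa [s] using hx))
  have hsphere_sub : Metric.sphere (0 : E) 1 ⊆ s := by
    intro x hx
    have : ‖x‖ = 1 := by simpa using hx
    exact hmem (by intro h; rw [h] at this; simp at this)
  -- uniform bound for derivatives of u on the unit sphere
  have hKex : ∀ i : ℕ, ∃ Ki : ℝ, ∀ x ∈ Metric.sphere (0 : E) 1, i ≤ n →
      ‖iteratedFDerivWithin ℝ i u s x‖ ≤ Ki := by
    intro i
    by_cases hi : i ≤ n
    · have hc : ContinuousOn (iteratedFDerivWithin ℝ i u s) s :=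
        hu.continuousOn_iteratedFDerivWithin (by exact_mod_cast hi) hs
      obtain ⟨Ki, hKi⟩ := (isCompact_sphere (0 : E) 1).exists_bound_of_continuousOn
        (hc.mono hsphere_sub)
      exact ⟨Ki, fun x hx _ => hKi x hx⟩
    · exact ⟨0, fun x hx h => absurd h hi⟩
  choose Kf hKf using hKex
  set K : ℝ := 1 + ∑ i ∈ Finset.range (n + 1), |Kf i| with hK_def
  have hsum_nonneg : (0:ℝ) ≤ ∑ i ∈ Finset.range (n + 1), |Kf i| :=
    Finset.sum_nonneg fun i _ => abs_nonneg _
  have hK1 : (1:ℝ) ≤ K := le_add_of_nonneg_right hsum_nonneg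
  have hKpos : (0:ℝ) < K := lt_of_lt_of_le one_pos hK1
  have hKb : ∀ i ≤ n, ∀ x ∈ Metric.sphere (0 : E) 1,
      ‖iteratedFDerivWithin ℝ i u s x‖ ≤ K := by
    intro i hi x hx
    refine (hKf i x hx hi).trans ?_
    calc Kf i ≤ |Kf i| := le_abs_self _
      _ ≤ ∑ j ∈ Finset.range (n + 1), |Kf j| :=
          Finset.single_le_sum (f := fun j => |Kf j|) (fun j _ => abs_nonneg _)
            (Finset.mem_range.2 (Nat.lt_succ_of_le hi))
      _ ≤ K := le_add_of_nonneg_left zero_le_one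
  refine ⟨(n.factorial : ℝ) * K ^ n + 1, by positivity, ?_⟩
  intro Ω t ht ξ hξ
  set a : ℝ := Ω * t with ha_def
  have ha : |a| = |Ω| * t := by rw [ha_def, abs_mul, abs_of_nonneg ht]
  set c : ℂ := Complex.I * (a : ℂ) with hc_def
  set g : ℝ → ℂ := fun x => Complex.exp (c * x) with hg_def
  have hfun : (fun ζ : E => Complex.exp (Complex.I * ((Ω * t * ζ 2 / ‖ζ‖ : ℝ) : ℂ)))
      = g ∘ u := by
    funext ζ
    simp only [g, u, Function.comp_apply, c, ha_def]
    congr 1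
    push_cast
    ring
  rw [hfun]
  have hg : ContDiff ℝ n g := by
    have h1 : ContDiff ℝ n (fun x : ℝ => c * (x : ℂ)) := by
      have heqf : (fun x : ℝ => c * (x : ℂ)) = ⇑(c • Complex.ofRealCLM) := by
        funext x; simp
      rw [heqf]
      exact ContinuousLinearMap.contDiff _
    exact ((Complex.contDiff_exp (𝕜 := ℝ)).of_le le_top).comp h1
  have hh : ContDiffOn ℝ n (g ∘ u) s := hg.comp_contDiffOn hu
  -- exp-derivative bounds
  have hgder : ∀ (i : ℕ) (y : ℝ), ‖iteratedFDeriv ℝ i g y‖ = |a| ^ i := by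
    intro i y
    rw [norm_iteratedFDeriv_eq_norm_iteratedDeriv, hg_def, myIteratedDerivCexpAux]
    have h1 : ‖Complex.exp (c * y)‖ = 1 := by
      simp [hc_def, Complex.norm_exp, Complex.mul_re, Complex.mul_im]
    rw [norm_mul, norm_pow, h1, mul_one, hc_def]
    simp
  have hξ' : ξ ∈ s := hmem hξ
  set r : ℝ := ‖ξ‖ with hr_def
  have hr : 0 < r := norm_pos_iff.2 hξ
  set L : E →L[ℝ] E := r⁻¹ • ContinuousLinearMap.id ℝ E with hL_def
  have hLapp : ∀ x : E, L x = r⁻¹ • x := fun x => rfl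
  have hLinv : L ⁻¹' s = s := by
    ext x
    simp only [mem_preimage, hL_def, hs_def, mem_compl_iff, mem_singleton_iff,
      ContinuousLinearMap.smul_apply, ContinuousLinearMap.id_apply, smul_eq_zero]
    constructor
    · intro h hx; exact h (Or.inr hx)
    · intro h hx; rcases hx with h' | h'
      · exact absurd h' (inv_ne_zero hr.ne')
      · exact h h'
  have hLξ_norm : ‖L ξ‖ = 1 := by
    rw [hLapp, norm_smul, norm_inv, Real.norm_eq_abs, abs_of_pos hr, ← hr_def,
      inv_mul_cancel₀ hr.ne']
  have hLξ_sphere : L ξ ∈ Metric.sphere (0 : E) 1 := by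
    simpa [Metric.mem_sphere, dist_eq_norm] using hLξ_norm
  have hLξs : L ξ ∈ s := hsphere_sub hLξ_sphere
  -- scale invariance of g ∘ u
  have hcomp : (g ∘ u) ∘ L = g ∘ u := by
    funext x
    simp only [Function.comp_apply, hLapp]
    congr 1
    show (r⁻¹ • x) 2 / ‖r⁻¹ • x‖ = x 2 / ‖x‖
    have h1 : (r⁻¹ • x) 2 = r⁻¹ * x 2 := rfl
    rw [h1, norm_smul, Real.norm_eq_abs, abs_of_pos (inv_pos.2 hr),
      mul_div_mul_left _ _ (inv_ne_zero hr.ne')]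
  -- homogeneity step
  have key := L.iteratedFDerivWithin_comp_right hh hs (by rw [hLinv]; exact hs) hLξs le_rfl
  rw [hcomp, hLinv] at key
  have hLnorm : ‖L‖ ≤ r⁻¹ := by
    refine ContinuousLinearMap.opNorm_le_bound _ (by positivity) fun x => ?_
    rw [hLapp, norm_smul, Real.norm_eq_abs, abs_of_pos (inv_pos.2 hr)]
  have hhom : ‖iteratedFDerivWithin ℝ n (g ∘ u) s ξ‖ ≤
      ‖iteratedFDerivWithin ℝ n (g ∘ u) s (L ξ)‖ * r⁻¹ ^ n := by
    rw [key]
    refine (ContinuousMultilinearMap.norm_compContinuousLinearMap_le _ _).trans ?_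
    have hprod : (∏ _i : Fin n, ‖L‖) ≤ r⁻¹ ^ n := by
      rw [Finset.prod_const]
      simpa using pow_le_pow_left₀ (norm_nonneg L) hLnorm n
    exact mul_le_mul_of_nonneg_left hprod (norm_nonneg _)
  -- Faà di Bruno bound at the unit sphere point
  have hC : ∀ i, i ≤ n →
      ‖iteratedFDerivWithin ℝ i g univ (u (L ξ))‖ ≤ (1 + |a|) ^ n := by
    intro i hi
    rw [iteratedFDerivWithin_univ, hgder]
    calc |a| ^ i ≤ (1 + |a|) ^ i :=
          pow_le_pow_left₀ (abs_nonneg a) (by linarith [abs_nonneg a]) i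
      _ ≤ (1 + |a|) ^ n := by
          apply pow_le_pow_right₀ _ hi
          linarith [abs_nonneg a]
  have hD : ∀ i, 1 ≤ i → i ≤ n → ‖iteratedFDerivWithin ℝ i u s (L ξ)‖ ≤ K ^ i := by
    intro i h1 h2
    refine (hKb i h2 (L ξ) hLξ_sphere).trans ?_
    exact le_self_pow₀ hK1 (by omega)
  have hsphb : ‖iteratedFDerivWithin ℝ n (g ∘ u) s (L ξ)‖ ≤
      (n.factorial : ℝ) * (1 + |a|) ^ n * K ^ n :=
    norm_iteratedFDerivWithin_comp_le hg.contDiffOn hu le_rfl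
      uniqueDiffOn_univ hs (mapsTo_univ _ _) hLξs hC hD
  -- assemble
  have heq : iteratedFDeriv ℝ n (g ∘ u) ξ = iteratedFDerivWithin ℝ n (g ∘ u) s ξ :=
    (iteratedFDerivWithin_of_isOpen n hs_open hξ').symm
  rw [heq]
  have hrpow : (0:ℝ) ≤ r⁻¹ ^ n := by positivity
  have habove : ‖iteratedFDerivWithin ℝ n (g ∘ u) s ξ‖ ≤
      ((n.factorial : ℝ) * (1 + |a|) ^ n * K ^ n) * r⁻¹ ^ n :=
    hhom.trans (mul_le_mul_of_nonneg_right hsphb hrpow)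
  refine habove.trans ?_
  rw [← ha]
  have h1 : (0:ℝ) ≤ (1 + |a|) ^ n := by positivity
  have h2 : (n.factorial : ℝ) * K ^ n ≤ (n.factorial : ℝ) * K ^ n + 1 := by linarith
  calc (n.factorial : ℝ) * (1 + |a|) ^ n * K ^ n * r⁻¹ ^ n
      = ((n.factorial : ℝ) * K ^ n) * r⁻¹ ^ n * (1 + |a|) ^ n := by ring
    _ ≤ ((n.factorial : ℝ) * K ^ n + 1) * r⁻¹ ^ n * (1 + |a|) ^ n := by gcongr
    _ = ((n.factorial : ℝ) * K ^ n + 1) * ‖ξ‖⁻¹ ^ n * (1 + |a|) ^ n := by rw [hr_def]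
end
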